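/- Define polynomials A_n(x;q) ∈ ℝ[x] by A_0(x;q) = 1 and A_{n+1}(x;q) = (nx+q)·A_n(x;q) − x(x−1)·(d/dx)A_n(x;q). Then for all n, m ∈ ℕ, the polynomial A_n(x;−m) has only real zeros (or is identically zero). -/

import Mathlib

open Polynomial

/-- All complex zeros of `f` are real (holds trivially for `f = 0`). -/
def AllRootsReal (f : Polynomial ℝ) : Prop := f.roots.card = f.natDegree

/-- `f` is real-rooted: nonzero and all of its complex zeros are real. -/
def RealRooted (f : Polynomial ℝ) : Prop := f ≠ 0 ∧ AllRootsReal f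

/-- The q-Eulerian polynomials `A_n(x;q)`: `A_0 = 1` and
`A_{n+1}(x;q) = (nx+q) A_n(x;q) − x(x−1) A_n'(x;q)`. -/
noncomputable def qEuler (q : ℝ) : ℕ → Polynomial ℝ
  | 0 => 1
  | n + 1 => (C (n : ℝ) * X + C q) * qEuler q n - X * (X - 1) * derivative (qEuler q n)

/- ### Auxiliary machinery

We use the explicit formula `(X-1)^m * A_n(x;-m) = Pp m n * (X-1)^n`, where
`Pp m n = ∑ (-1)^i C(m,i) i^n X^(m-i)`.  The polynomial `Pp m n` is the reflection of
`gg m n = ∑ (-1)^i C(m,i) i^n X^i`, which satisfies `gg m (n+1) = X * (gg m n)'` and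
`gg m 0 = (1-X)^m`; this lets us prove that `gg m n` splits over `ℝ` by Rolle's theorem
(`Polynomial.card_roots_le_derivative`), and splitting is inherited by reflections and
by factors. -/

noncomputable def gg (m n : ℕ) : Polynomial ℝ :=
  ∑ i ∈ Finset.range (m+1), C ((-1)^i * (m.choose i : ℝ) * (i:ℝ)^n) * X^i

noncomputable def Pp (m n : ℕ) : Polynomial ℝ :=
  ∑ i ∈ Finset.range (m+1), C ((-1)^i * (m.choose i : ℝ) * (i:ℝ)^n) * X^(m-i)

lemma gstep (m n : ℕ) : gg m (n+1) = X * derivative (gg m n) := by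
  unfold gg
  rw [derivative_sum, Finset.mul_sum]
  refine Finset.sum_congr rfl fun i _ => ?_
  rw [derivative_C_mul, derivative_X_pow]
  cases i with
  | zero => simp
  | succ j =>
    simp only [Nat.add_sub_cancel]
    simp only [pow_succ, map_mul, map_pow, map_neg, map_one, map_natCast]
    push_cast
    ring

lemma reflect_sum {ι : Type*} (N : ℕ) (s : Finset ι) (f : ι → Polynomial ℝ) :
    reflect N (∑ i ∈ s, f i) = ∑ i ∈ s, reflect N (f i) := by
  classical
  induction s using Finset.induction with
  | empty => simp
  | insert _ _ h ih => simp [Finset.sum_insert h, reflect_add, ih]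

lemma Prefl (m n : ℕ) : Pp m n = reflect m (gg m n) := by
  unfold gg Pp
  rw [reflect_sum]
  refine Finset.sum_congr rfl fun i hi => ?_
  rw [reflect_C_mul_X_pow, revAt_le (Nat.lt_succ_iff.mp (Finset.mem_range.mp hi))]

lemma Pstep (m n : ℕ) : Pp m (n+1) = C (m:ℝ) * Pp m n - X * derivative (Pp m n) := by
  unfold Pp
  rw [derivative_sum, Finset.mul_sum, Finset.mul_sum, ← Finset.sum_sub_distrib]
  refine Finset.sum_congr rfl fun i hi => ?_
  have hi' : i ≤ m := Nat.lt_succ_iff.mp (Finset.mem_range.mp hi)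
  rw [derivative_C_mul, derivative_X_pow]
  rcases Nat.lt_or_ge i m with h | h
  · have hk : m - i - 1 + 1 = m - i := by omega
    have hx : (X : Polynomial ℝ) * X ^ (m - i - 1) = X ^ (m - i) := by
      rw [← pow_succ', hk]
    have hc : ((m - i : ℕ) : ℝ) = (m : ℝ) - (i : ℝ) := by
      push_cast [Nat.cast_sub hi']
      ring
    rw [hc]
    simp only [pow_succ, map_mul, map_pow, map_neg, map_one, map_natCast, map_sub]
    linear_combination (((m:Polynomial ℝ) - (i:Polynomial ℝ)) *
      ((-1)^i * ((m.choose i : ℕ):Polynomial ℝ) * (i:Polynomial ℝ)^n)) * hx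
  · have him : i = m := le_antisymm hi' h
    subst him
    simp only [Nat.sub_self, pow_zero, Nat.cast_zero, map_zero]
    simp only [pow_succ, map_mul, map_pow, map_neg, map_one, map_natCast]
    push_cast
    ring

lemma gzero (m : ℕ) : gg m 0 = (1 - X)^m := by
  have : (1 - X : Polynomial ℝ) = -X + 1 := by ring
  rw [this, add_pow]
  unfold gg
  refine Finset.sum_congr rfl fun i hi => ?_
  simp only [pow_zero, mul_one, one_pow]
  simp only [map_mul, map_pow, map_neg, map_one, map_natCast]
  ring

lemma Pzero (m : ℕ) : Pp m 0 = (X - 1)^m := by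
  have h1 : (X - 1 : Polynomial ℝ) = X + (-1) := by ring
  rw [h1, add_pow]
  unfold Pp
  rw [← Finset.sum_range_reflect]
  refine Finset.sum_congr rfl fun i hi => ?_
  have hi' : i ≤ m := Nat.lt_succ_iff.mp (Finset.mem_range.mp hi)
  have h2 : m + 1 - 1 - i = m - i := by omega
  have h3 : m - (m - i) = i := by omega
  rw [h2, h3, Nat.choose_symm hi']
  simp only [pow_zero, mul_one]
  simp only [map_mul, map_pow, map_neg, map_one, map_natCast]
  ring

lemma mainIdent (m : ℕ) : ∀ n, (X - 1)^m * qEuler (-(m:ℝ)) n = Pp m n * (X - 1)^n := by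
  intro n
  induction n with
  | zero => simp [qEuler, Pzero]
  | succ n ih =>
    set E := qEuler (-(m:ℝ)) n with hE
    have hd := congrArg derivative ih
    rw [derivative_mul, derivative_mul, derivative_pow, derivative_pow] at hd
    simp only [derivative_sub, derivative_X, derivative_one, sub_zero, mul_one] at hd
    have hm : C (m:ℝ) * ((X - 1) * (X - 1)^(m-1)) = C (m:ℝ) * (X - 1)^m := by
      cases m with
      | zero => simp
      | succ k => rw [Nat.add_sub_cancel, ← pow_succ']
    have hn : C (n:ℝ) * ((X - 1) * (X - 1)^(n-1)) = C (n:ℝ) * (X - 1)^n := by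
      cases n with
      | zero => simp
      | succ k => rw [Nat.add_sub_cancel, ← pow_succ']
    have hd2 : C (m:ℝ) * (X-1)^m * E + (X-1)^(m+1) * derivative E
        = derivative (Pp m n) * (X-1)^(n+1) + C (n:ℝ) * Pp m n * (X-1)^n := by
      linear_combination (X - 1) * hd - E * hm + Pp m n * hn
    have hP := Pstep m n
    show (X - 1)^m * ((C (n:ℝ) * X + C (-(m:ℝ))) * E - X * (X - 1) * derivative E)
        = Pp m (n+1) * (X - 1)^(n+1)
    rw [map_neg]
    linear_combination (C (n:ℝ) * X - C (m:ℝ) + C (m:ℝ) * X) * ih - X * hd2 - (X-1)^(n+1) * hP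

lemma splits_gg (m : ℕ) : ∀ n, gg m n = 0 ∨ Splits (gg m n) := by
  intro n
  induction n with
  | zero =>
    right
    rw [gzero]
    exact Splits.pow (Splits.of_natDegree_le_one (f := (1 - X : Polynomial ℝ)) (le_trans (natDegree_sub_le _ _) (by simp))) _
  | succ n ih =>
    rcases ih with h0 | hs
    · left; rw [gstep, h0]; simp
    · by_cases hg : gg m n = 0
      · left; rw [gstep, hg]; simp
      by_cases hg' : derivative (gg m n) = 0
      · left; rw [gstep, hg']; simp
      right
      rw [gstep]
      have hcard : Multiset.card (gg m n).roots = (gg m n).natDegree :=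
        splits_iff_card_roots.mp hs
      have hdeg : (gg m n).natDegree ≠ 0 := by
        intro h
        have := eq_C_of_natDegree_eq_zero h
        apply hg'
        rw [this, derivative_C]
      have hlt : (derivative (gg m n)).natDegree < (gg m n).natDegree :=
        natDegree_derivative_lt hdeg
      have hle : Multiset.card (derivative (gg m n)).roots ≤ (derivative (gg m n)).natDegree :=
        card_roots' _
      have hge := card_roots_le_derivative (gg m n)
      have hcard' : Multiset.card (derivative (gg m n)).roots
          = (derivative (gg m n)).natDegree := by omega
      rw [splits_iff_card_roots, roots_mul (mul_ne_zero X_ne_zero hg'), roots_X,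
        natDegree_mul X_ne_zero hg', natDegree_X]
      simp [hcard', add_comm]

lemma splits_reflect_aux (c : ℝ) : ∀ (s : Multiset ℝ) (N : ℕ), Multiset.card s ≤ N →
    Splits (reflect N (C c * (s.map fun a => X - C a).prod)) := by
  intro s
  induction s using Multiset.induction with
  | empty =>
    intro N _
    simp only [Multiset.map_zero, Multiset.prod_zero, mul_one, reflect_C]
    exact Splits.mul (Splits.C _) (Splits.pow Splits.X _)
  | cons a s ih =>
    intro N hN
    have hN1 : 1 ≤ N := le_trans (by simp) hN
    rw [Multiset.map_cons, Multiset.prod_cons, mul_left_comm]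
    have hrw : N = 1 + (N - 1) := by omega
    rw [hrw]
    have hdg : (C c * (s.map fun a => X - C a).prod).natDegree ≤ N - 1 := by
      refine le_trans (natDegree_mul_le) ?_
      rw [natDegree_C, zero_add]
      refine le_trans (natDegree_multiset_prod_le _) ?_
      have : Multiset.card s ≤ N - 1 := by
        have := Multiset.card_cons a s ▸ hN; omega
      refine le_trans (le_of_eq ?_) this
      rw [Multiset.map_map]
      simp [Function.comp, natDegree_X_sub_C]
    rw [reflect_mul (X - C a) _ (le_of_eq (natDegree_X_sub_C a)) hdg]
    refine Splits.mul ?_ (ih (N-1) (by have := Multiset.card_cons a s ▸ hN; omega))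
    refine Splits.of_natDegree_le_one ?_
    have hre : reflect 1 (X - C a) = 1 + C (-a) * X := by
      have h' : (X - C a : Polynomial ℝ) = X + C (-a) := by rw [map_neg]; ring
      rw [h', reflect_add, reflect_one_X, reflect_C, pow_one]
    rw [hre]
    exact le_trans (natDegree_add_le _ _)
      (max_le (by simp) (le_trans (natDegree_C_mul_le _ _) (by simp)))

lemma splits_reflect {f : Polynomial ℝ} (N : ℕ) (hd : f.natDegree ≤ N)
    (hs : Splits f) : Splits (reflect N f) := by
  by_cases h0 : f = 0
  · rw [h0, reflect_zero]; exact Splits.zero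
  · have hcard : Multiset.card f.roots = f.natDegree := splits_iff_card_roots.mp hs
    have hprod := hs.eq_prod_roots
    rw [hprod]
    exact splits_reflect_aux _ _ _ (by rw [hcard]; exact hd)

lemma gg_natDegree_le (m n : ℕ) : (gg m n).natDegree ≤ m := by
  unfold gg
  refine natDegree_sum_le_of_forall_le _ _ fun i hi => ?_
  refine le_trans (natDegree_C_mul_le _ _) ?_
  rw [natDegree_X_pow]
  exact Nat.lt_succ_iff.mp (Finset.mem_range.mp hi)

/-- Brenti's conjecture: for all `n, m ∈ ℕ`, the polynomial `A_n(x;−m)` has only real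
zeros (or is identically zero). -/
theorem stmt15 (n m : ℕ) : AllRootsReal (qEuler (-(m : ℝ)) n) := by
  have h := mainIdent m n
  have hx1 : ((X : Polynomial ℝ) - 1) ≠ 0 := by
    have h1 : (X - 1 : Polynomial ℝ) = X - C 1 := by rw [C_1]
    rw [h1]; exact X_sub_C_ne_zero 1
  by_cases hP : Pp m n = 0
  · have hE : qEuler (-(m:ℝ)) n = 0 := by
      rw [hP, zero_mul] at h
      rcases mul_eq_zero.mp h with h' | h'
      · exact absurd h' (pow_ne_zero _ hx1)
      · exact h'
    rw [hE]; simp [AllRootsReal]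
  · have hgne : gg m n ≠ 0 := fun hh => hP (by rw [Prefl, hh, reflect_zero])
    have hgs : Splits (gg m n) := (splits_gg m n).resolve_left hgne
    have hPs : Splits (Pp m n) := by
      rw [Prefl]; exact splits_reflect m (gg_natDegree_le m n) hgs
    have hx1deg : (X - 1 : Polynomial ℝ).natDegree ≤ 1 := by
      have h1 : (X - 1 : Polynomial ℝ) = X - C 1 := by rw [C_1]
      rw [h1, natDegree_X_sub_C]
    have hRs : Splits (Pp m n * (X - 1)^n) :=
      Splits.mul hPs (Splits.pow (Splits.of_natDegree_le_one hx1deg) _)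
    rw [← h] at hRs
    have hne : ((X - 1 : Polynomial ℝ))^m * qEuler (-(m:ℝ)) n ≠ 0 := by
      rw [h]; exact mul_ne_zero hP (pow_ne_zero _ hx1)
    exact splits_iff_card_roots.mp (Splits.of_dvd hRs hne (dvd_mul_left _ _))
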